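/- For every integer n ≥ 2 and every α ∈ (0,1], with β = 1 − α, one has ∑_{d ≤ n} φ(d)(1 − β^⌊n/d⌋) = (3/π²) · (α Li₂(β)/β) · n² + O(α n (log n)²), where for α = 1 the factor α Li₂(β)/β is interpreted as 1. -/

import Mathlib

set_option maxHeartbeats 1600000

open Finset ArithmeticFunction
open scoped ArithmeticFunction.Moebius

open LSeries.notation in
lemma moebius_tsum : ∑' e : ℕ, (μ (e+1) : ℝ) / ((e:ℝ)+1)^2 = 6 / Real.pi ^ 2 := by
  have h2 : (1:ℝ) < (2:ℂ).re := by norm_num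
  have hz := LSeries_zeta_mul_Lseries_moebius (s := 2) h2
  rw [LSeries_zeta_eq_riemannZeta h2, riemannZeta_two] at hz
  have hsum : LSeriesSummable (↗μ) 2 := ArithmeticFunction.LSeriesSummable_moebius_iff.mpr h2
  have hL : LSeries (↗μ) 2 = ∑' e : ℕ, LSeries.term (↗μ) 2 (e+1) := by
    rw [LSeries, Summable.tsum_eq_zero_add hsum]
    simp [LSeries.term]
  have hterm : ∀ e : ℕ, LSeries.term (↗μ) 2 (e+1) = ((μ (e+1) : ℝ) / ((e:ℝ)+1)^2 : ℝ) := by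
    intro e
    rw [LSeries.term_def, if_neg (Nat.succ_ne_zero e), Complex.cpow_two]
    push_cast
    norm_num
  have key : ((∑' e : ℕ, (μ (e+1) : ℝ) / ((e:ℝ)+1)^2 : ℝ) : ℂ) = LSeries (↗μ) 2 := by
    rw [hL, Complex.ofReal_tsum]
    exact tsum_congr fun e => (hterm e).symm
  have hne : (Real.pi : ℂ)^2 ≠ 0 := by simp [Real.pi_ne_zero]
  have key2 : ((∑' e : ℕ, (μ (e+1) : ℝ) / ((e:ℝ)+1)^2 : ℝ) : ℂ) = 6 / (Real.pi:ℂ)^2 := by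
    rw [key, eq_div_iff hne]
    linear_combination 6 * hz
  exact_mod_cast key2

lemma swap_lemma (f : ℕ → ℕ → ℝ) (n : ℕ) :
    ∑ d ∈ Icc 1 n, ∑ p ∈ d.divisorsAntidiagonal, f p.1 p.2
      = ∑ e ∈ Icc 1 n, ∑ m ∈ Icc 1 (n / e), f e m := by
  rw [Finset.sum_sigma', Finset.sum_sigma']
  refine Finset.sum_nbij' (fun x => ⟨x.2.1, x.2.2⟩) (fun x => ⟨x.1 * x.2, (x.1, x.2)⟩) ?_ ?_ ?_ ?_ ?_
  · rintro ⟨d, x, y⟩ h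
    simp only [Finset.mem_sigma, Finset.mem_Icc, Nat.mem_divisorsAntidiagonal] at h ⊢
    obtain ⟨⟨hd1, hdn⟩, hxy, hd0⟩ := h
    have hx0 : 1 ≤ x := by
      rcases Nat.eq_zero_or_pos x with h0 | h0
      · simp [h0] at hxy; omega
      · exact h0
    have hy0 : 1 ≤ y := by
      rcases Nat.eq_zero_or_pos y with h0 | h0
      · simp [h0] at hxy; omega
      · exact h0
    refine ⟨⟨hx0, le_trans (Nat.le_mul_of_pos_right x hy0) (le_trans (le_of_eq hxy) hdn)⟩, hy0, ?_⟩
    · exact (Nat.le_div_iff_mul_le hx0).mpr (by rw [mul_comm]; omega)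
  · rintro ⟨e, m⟩ h
    simp only [Finset.mem_sigma, Finset.mem_Icc, Nat.mem_divisorsAntidiagonal] at h ⊢
    obtain ⟨⟨he1, hen⟩, hm1, hm⟩ := h
    have hle := (Nat.le_div_iff_mul_le (by omega : 0 < e)).mp hm
    refine ⟨⟨by nlinarith, by nlinarith⟩, ?_⟩
    exact ⟨trivial, by positivity⟩
  · rintro ⟨d, x, y⟩ h
    simp only [Finset.mem_sigma, Finset.mem_Icc, Nat.mem_divisorsAntidiagonal] at h
    obtain ⟨⟨hd1, hdn⟩, hxy, hd0⟩ := h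
    simp [hxy]
  · rintro ⟨e, m⟩ h; rfl
  · rintro ⟨d, x, y⟩ h; rfl

lemma sum_Icc_id_real (k : ℕ) : ∑ m ∈ Icc 1 k, (m:ℝ) = k * (k+1) / 2 := by
  induction k with
  | zero => simp
  | succ k ih =>
    rw [Finset.sum_Icc_succ_top (by omega), ih]
    push_cast; ring

lemma totient_moebius (d : ℕ) (hd : 0 < d) :
    (Nat.totient d : ℝ) = ∑ p ∈ d.divisorsAntidiagonal, (μ p.1 : ℝ) * p.2 := by
  have h := (sum_eq_iff_sum_mul_moebius_eq (R := ℝ)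
      (f := fun d => (Nat.totient d : ℝ)) (g := fun n => (n:ℝ))).mp ?_ d hd
  · exact h.symm
  · intro n hn
    exact_mod_cast congrArg (Nat.cast : ℕ → ℝ) (Nat.sum_totient n)

lemma phi_sum_eq (n : ℕ) :
    ∑ d ∈ Icc 1 n, (Nat.totient d : ℝ)
      = ∑ e ∈ Icc 1 n, (μ e : ℝ) * ((n / e : ℕ) * ((n / e : ℕ) + 1) / 2) := by
  have h1 : ∑ d ∈ Icc 1 n, (Nat.totient d : ℝ)
      = ∑ d ∈ Icc 1 n, ∑ p ∈ d.divisorsAntidiagonal, (μ p.1 : ℝ) * p.2 := by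
    refine Finset.sum_congr rfl fun d hd => ?_
    exact totient_moebius d (Finset.mem_Icc.mp hd).1
  rw [h1, swap_lemma (fun e m => (μ e : ℝ) * m) n]
  refine Finset.sum_congr rfl fun e _ => ?_
  rw [← Finset.mul_sum, sum_Icc_id_real]

lemma summable_shift_inv_sq (n : ℕ) : Summable (fun k : ℕ => (1:ℝ)/((n:ℝ)+1+k)^2) := by
  have h : Summable (fun k : ℕ => (1:ℝ)/((k:ℝ))^2) := by
    rw [Real.summable_one_div_nat_pow]; norm_num
  have := (summable_nat_add_iff (f := fun k : ℕ => (1:ℝ)/((k:ℝ))^2) (n+1)).mpr h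
  refine this.congr fun k => ?_
  push_cast; ring_nf

lemma tail_inv_sq (n : ℕ) (hn : 1 ≤ n) :
    ∑' k : ℕ, (1:ℝ)/((n:ℝ)+1+k)^2 ≤ 1/(n:ℝ) := by
  refine Summable.tsum_le_of_sum_le (summable_shift_inv_sq n) fun s => ?_
  obtain ⟨N, hN⟩ := s.exists_nat_subset_range
  calc ∑ k ∈ s, (1:ℝ)/((n:ℝ)+1+k)^2
      ≤ ∑ k ∈ range N, (1:ℝ)/((n:ℝ)+1+k)^2 := by
        refine Finset.sum_le_sum_of_subset_of_nonneg hN fun k _ _ => by positivity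
    _ = ∑ i ∈ Ioc n (n+N), ((i:ℝ)^2)⁻¹ := by
        rw [← Finset.Ico_add_one_add_one_eq_Ioc, Finset.sum_Ico_eq_sum_range]
        refine Finset.sum_congr (by congr 1; omega) fun k _ => by
          push_cast; rw [one_div]
    _ ≤ ((n:ℝ))⁻¹ - ((n+N : ℕ):ℝ)⁻¹ := sum_Ioc_inv_sq_le_sub (by omega) (by omega)
    _ ≤ 1/(n:ℝ) := by
        have : (0:ℝ) ≤ (((n+N:ℕ)):ℝ)⁻¹ := by positivity
        rw [one_div]
        linarith

lemma summable_mu : Summable (fun e : ℕ => (μ (e+1) : ℝ) / ((e:ℝ)+1)^2) := by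
  refine Summable.of_norm_bounded (summable_shift_inv_sq 0) fun e => ?_
  rw [norm_div, Real.norm_eq_abs, Real.norm_eq_abs]
  have h1 : |(μ (e+1) : ℝ)| ≤ 1 := by
    have := abs_moebius_le_one (n := e+1)
    exact_mod_cast this
  have h2 : |((e:ℝ)+1)^2| = ((e:ℝ)+1)^2 := abs_of_nonneg (by positivity)
  rw [h2]
  have h3 : ((0:ℕ):ℝ)+1+e = (e:ℝ)+1 := by push_cast; ring
  rw [h3]
  rw [div_le_div_iff₀ (by positivity) (by positivity)]
  nlinarith [sq_nonneg ((e:ℝ)+1)]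

lemma mu_partial (n : ℕ) (hn : 1 ≤ n) :
    |∑ e ∈ Icc 1 n, (μ e : ℝ) / (e:ℝ)^2 - 6 / Real.pi ^ 2| ≤ 1/(n:ℝ) := by
  have hpart : ∑ e ∈ Icc 1 n, (μ e : ℝ) / (e:ℝ)^2
      = ∑ k ∈ range n, (μ (k+1) : ℝ) / ((k:ℝ)+1)^2 := by
    rw [← Finset.Ico_add_one_right_eq_Icc, Finset.sum_Ico_eq_sum_range]
    refine Finset.sum_congr (by congr 1) fun k _ => by rw [add_comm 1 k]; push_cast; ring_nf
  have hsplit := Summable.sum_add_tsum_nat_add (f := fun e : ℕ => (μ (e+1) : ℝ) / ((e:ℝ)+1)^2) n summable_mu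
  rw [moebius_tsum] at hsplit
  rw [hpart]
  have : ∑ k ∈ range n, (μ (k+1) : ℝ) / ((k:ℝ)+1)^2 - 6 / Real.pi ^ 2
      = -(∑' i : ℕ, (μ (i+n+1) : ℝ) / (((i+n:ℕ):ℝ)+1)^2) := by
    rw [← hsplit]; ring
  rw [this, abs_neg]
  have hsum1 : Summable (fun i : ℕ => (μ (i+n+1) : ℝ) / (((i+n:ℕ):ℝ)+1)^2) :=
    ((summable_nat_add_iff (f := fun e : ℕ => (μ (e+1) : ℝ) / ((e:ℝ)+1)^2) n).mpr summable_mu)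
  have hbound : ∀ i : ℕ, |(μ (i+n+1) : ℝ) / (((i+n:ℕ):ℝ)+1)^2| ≤ (1:ℝ)/((n:ℝ)+1+i)^2 := by
    intro i
    rw [abs_div]
    have h1 : |(μ (i+n+1) : ℝ)| ≤ 1 := by exact_mod_cast abs_moebius_le_one (n := i+n+1)
    have h2 : |(((i+n:ℕ):ℝ)+1)^2| = ((n:ℝ)+1+i)^2 := by
      rw [abs_of_nonneg (by positivity)]; push_cast; ring
    rw [h2, div_le_div_iff₀ (by positivity) (by positivity)]
    nlinarith [sq_nonneg ((n:ℝ)+1+i)]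
  set f : ℕ → ℝ := fun i => (μ (i+n+1) : ℝ) / (((i+n:ℕ):ℝ)+1)^2 with hf
  set g : ℕ → ℝ := fun i => (1:ℝ)/((n:ℝ)+1+i)^2 with hg
  have hgs : Summable g := summable_shift_inv_sq n
  have hub : ∀ i, f i ≤ g i := fun i => (le_abs_self _).trans (hbound i)
  have hlb : ∀ i, -g i ≤ f i := fun i => (neg_le_neg (hbound i)).trans (neg_abs_le _)
  have htail := tail_inv_sq n hn
  refine abs_le.mpr ⟨?_, (Summable.tsum_le_tsum hub hsum1 hgs).trans htail⟩
  have h1 : ∑' i, -g i ≤ ∑' i, f i := Summable.tsum_le_tsum hlb hgs.neg hsum1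
  rw [tsum_neg] at h1
  linarith

lemma harmonic_Icc (n : ℕ) : ∑ e ∈ Icc 1 n, (1:ℝ)/(e:ℝ) ≤ Real.log n + 1 := by
  have h := harmonic_le_one_add_log n
  have heq : ∑ e ∈ Icc 1 n, (1:ℝ)/(e:ℝ) = (harmonic n : ℝ) := by
    rw [harmonic]
    push_cast
    rw [← Finset.Ico_add_one_right_eq_Icc, Finset.sum_Ico_eq_sum_range]
    refine Finset.sum_congr (by congr 1) fun k _ => by push_cast; rw [one_div, add_comm 1 (k:ℝ)]
  rw [heq]; linarith

lemma phi_asym (n : ℕ) :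
    |∑ d ∈ Icc 1 n, (Nat.totient d : ℝ) - 3 / Real.pi ^ 2 * (n:ℝ)^2|
      ≤ 3/2 * (n:ℝ) * (Real.log n + 1) := by
  rcases Nat.eq_zero_or_pos n with rfl | hn
  · simp
  have hlog : 0 ≤ Real.log n := Real.log_natCast_nonneg n
  rw [phi_sum_eq]
  -- T e := (n/e) * ((n/e)+1) / 2 ; x e := n/e (real)
  have key : ∀ e ∈ Icc 1 n,
      |(μ e : ℝ) * ((n / e : ℕ) * ((n / e : ℕ) + 1) / 2) - (μ e : ℝ) / (e:ℝ)^2 * ((n:ℝ)^2/2)|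
        ≤ (n:ℝ)/(e:ℝ) := by
    intro e he
    rw [Finset.mem_Icc] at he
    have he1 : (1:ℝ) ≤ (e:ℝ) := by exact_mod_cast he.1
    have hepos : (0:ℝ) < e := by linarith
    set k : ℕ := n / e with hk
    set x : ℝ := (n:ℝ)/(e:ℝ) with hx
    have hx1 : (1:ℝ) ≤ x := by
      rw [hx, le_div_iff₀ hepos]; simpa using by exact_mod_cast he.2
    have hkx : (k:ℝ) ≤ x := by
      rw [hx, le_div_iff₀ hepos]
      exact_mod_cast Nat.div_mul_le_self n e
    have hxk : x < (k:ℝ) + 1 := by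
      rw [hx, div_lt_iff₀ hepos]
      calc (n:ℝ) < ((e * (n/e + 1) : ℕ) : ℝ) := by exact_mod_cast Nat.lt_mul_div_succ n (by omega)
        _ = ((k:ℝ)+1) * e := by push_cast; ring
    have hmu : |(μ e : ℝ)| ≤ 1 := by exact_mod_cast abs_moebius_le_one (n := e)
    have hT : |(k:ℝ) * ((k:ℝ)+1)/2 - x^2/2| ≤ x := by
      refine abs_le.mpr ⟨by nlinarith [Nat.cast_nonneg (α := ℝ) k], by nlinarith [Nat.cast_nonneg (α := ℝ) k]⟩
    have hre : (μ e : ℝ) / (e:ℝ)^2 * ((n:ℝ)^2/2) = (μ e : ℝ) * (x^2/2) := by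
      rw [hx]; field_simp
    rw [hre, ← mul_sub, abs_mul]
    calc |(μ e : ℝ)| * |(k:ℝ) * ((k:ℝ)+1)/2 - x^2/2| ≤ 1 * x :=
      mul_le_mul hmu hT (abs_nonneg _) zero_le_one
    _ = x := one_mul x
  have step1 : |∑ e ∈ Icc 1 n, (μ e : ℝ) * ((n / e : ℕ) * ((n / e : ℕ) + 1) / 2)
      - (∑ e ∈ Icc 1 n, (μ e : ℝ) / (e:ℝ)^2) * ((n:ℝ)^2/2)|
      ≤ (n:ℝ) * (Real.log n + 1) := by
    rw [Finset.sum_mul, ← Finset.sum_sub_distrib]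
    calc |∑ e ∈ Icc 1 n, ((μ e : ℝ) * ((n / e : ℕ) * ((n / e : ℕ) + 1) / 2) - (μ e : ℝ) / (e:ℝ)^2 * ((n:ℝ)^2/2))|
        ≤ ∑ e ∈ Icc 1 n, |(μ e : ℝ) * ((n / e : ℕ) * ((n / e : ℕ) + 1) / 2) - (μ e : ℝ) / (e:ℝ)^2 * ((n:ℝ)^2/2)| :=
          Finset.abs_sum_le_sum_abs _ _
      _ ≤ ∑ e ∈ Icc 1 n, (n:ℝ)/(e:ℝ) := Finset.sum_le_sum key
      _ = (n:ℝ) * ∑ e ∈ Icc 1 n, (1:ℝ)/(e:ℝ) := by rw [Finset.mul_sum]; exact Finset.sum_congr rfl fun e _ => by ring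
      _ ≤ (n:ℝ) * (Real.log n + 1) := by
          have := harmonic_Icc n
          have hn0 : (0:ℝ) ≤ n := Nat.cast_nonneg n
          nlinarith
  have step2 : |(∑ e ∈ Icc 1 n, (μ e : ℝ) / (e:ℝ)^2) * ((n:ℝ)^2/2) - 3 / Real.pi ^ 2 * (n:ℝ)^2|
      ≤ (n:ℝ)/2 := by
    have h := mu_partial n hn
    have h3 : 3 / Real.pi ^ 2 * (n:ℝ)^2 = (6 / Real.pi ^ 2) * ((n:ℝ)^2/2) := by ring
    rw [h3, ← sub_mul, abs_mul]
    have hnn : |(n:ℝ)^2/2| = (n:ℝ)^2/2 := abs_of_nonneg (by positivity)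
    rw [hnn]
    calc |∑ e ∈ Icc 1 n, (μ e : ℝ) / (e:ℝ)^2 - 6 / Real.pi ^ 2| * ((n:ℝ)^2/2)
        ≤ (1/(n:ℝ)) * ((n:ℝ)^2/2) := by
          exact mul_le_mul_of_nonneg_right h (by positivity)
      _ = (n:ℝ)/2 := by
          field_simp
  calc |∑ e ∈ Icc 1 n, (μ e : ℝ) * ((n / e : ℕ) * ((n / e : ℕ) + 1) / 2) - 3 / Real.pi ^ 2 * (n:ℝ)^2|
      ≤ (n:ℝ) * (Real.log n + 1) + (n:ℝ)/2 := by
        have := abs_sub_abs_le_abs_sub (0:ℝ) (0:ℝ)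
        calc _ ≤ |∑ e ∈ Icc 1 n, (μ e : ℝ) * ((n / e : ℕ) * ((n / e : ℕ) + 1) / 2)
            - (∑ e ∈ Icc 1 n, (μ e : ℝ) / (e:ℝ)^2) * ((n:ℝ)^2/2)|
            + |(∑ e ∈ Icc 1 n, (μ e : ℝ) / (e:ℝ)^2) * ((n:ℝ)^2/2) - 3 / Real.pi ^ 2 * (n:ℝ)^2| :=
              abs_sub_le _ _ _
          _ ≤ (n:ℝ) * (Real.log n + 1) + (n:ℝ)/2 := add_le_add step1 step2
    _ ≤ 3/2 * (n:ℝ) * (Real.log n + 1) := by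
        have hn0 : (1:ℝ) ≤ (n:ℝ) := by exact_mod_cast hn
        nlinarith

/-- The dilogarithm `Li₂(z) = ∑_{k ≥ 1} z^k / k²`. -/
noncomputable def Li2 (z : ℝ) : ℝ := ∑' k : ℕ, z ^ (k + 1) / ((k : ℝ) + 1) ^ 2

theorem sum_totient_one_sub_pow : ∃ C : ℝ, 0 < C ∧
    ∀ n : ℕ, 2 ≤ n → ∀ α : ℝ, 0 < α → α ≤ 1 →
      |(∑ d ∈ Finset.Icc 1 n, (Nat.totient d : ℝ) * (1 - (1 - α) ^ (n / d)))
          - 3 / Real.pi ^ 2 *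
              (if α = 1 then 1 else α * Li2 (1 - α) / (1 - α)) * (n : ℝ) ^ 2|
        ≤ C * α * (n : ℝ) * Real.log n ^ 2 := by
  refine ⟨30, by norm_num, fun n hn α hα0 hα1 => ?_⟩
  set β : ℝ := 1 - α with hβ
  have hβ0 : 0 ≤ β := by rw [hβ]; linarith
  have hβ1 : β < 1 := by rw [hβ]; linarith
  set L : ℝ := Real.log n with hL
  have hn1 : (1:ℝ) ≤ (n:ℝ) := by exact_mod_cast (by omega : 1 ≤ n)
  have hL2 : (1:ℝ)/2 ≤ L := by
    have h2 : Real.log 2 ≤ L := by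
      rw [hL]; exact Real.log_le_log (by norm_num) (by exact_mod_cast hn)
    have := Real.log_two_gt_d9
    linarith
  set c : ℝ := 3 / Real.pi ^ 2 with hc
  have hπ : (3:ℝ) < Real.pi := Real.pi_gt_three
  have hc0 : 0 < c := by rw [hc]; positivity
  have hc1 : c ≤ 1 := by
    rw [hc, div_le_one (by positivity)]
    nlinarith
  set Φr : ℕ → ℝ := fun k => ∑ d ∈ Icc 1 k, (Nat.totient d : ℝ) with hΦr
  set S : ℝ := ∑' k : ℕ, β ^ k / ((k:ℝ)+1)^2 with hS
  -- summability of S's series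
  have hSb : ∀ k : ℕ, |β ^ k / ((k:ℝ)+1)^2| ≤ (1:ℝ)/(((0:ℕ):ℝ)+1+k)^2 := by
    intro k
    rw [abs_div, abs_of_nonneg (pow_nonneg hβ0 k), abs_of_nonneg (by positivity)]
    have h1 : β ^ k ≤ 1 := pow_le_one₀ hβ0 (le_of_lt hβ1)
    have h2 : (((0:ℕ):ℝ)+1+k)^2 = ((k:ℝ)+1)^2 := by push_cast; ring
    rw [h2, div_le_div_iff₀ (by positivity) (by positivity)]
    nlinarith [sq_nonneg ((k:ℝ)+1)]
  have hSsum : Summable (fun k : ℕ => β ^ k / ((k:ℝ)+1)^2) := by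
    refine Summable.of_norm_bounded (summable_shift_inv_sq 0) fun k => ?_
    rw [Real.norm_eq_abs]
    exact hSb k
  -- Step A
  have hgeom : ∀ m : ℕ, 1 - β ^ m = ∑ i ∈ range m, β ^ i * α := by
    intro m
    have h := geom_sum_mul β m
    calc 1 - β ^ m = (∑ i ∈ range m, β ^ i) * α := by
          linear_combination h
      _ = ∑ i ∈ range m, β ^ i * α := Finset.sum_mul _ _ _
  have stepA : ∑ d ∈ Icc 1 n, (Nat.totient d : ℝ) * (1 - β ^ (n / d))
      = ∑ j ∈ range n, β ^ j * (α * Φr (n / (j+1))) := by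
    calc ∑ d ∈ Icc 1 n, (Nat.totient d : ℝ) * (1 - β ^ (n / d))
        = ∑ d ∈ Icc 1 n, ∑ j ∈ range (n / d), (Nat.totient d : ℝ) * (β ^ j * α) := by
          refine Finset.sum_congr rfl fun d hd => ?_
          rw [hgeom (n / d), Finset.mul_sum]
      _ = ∑ d ∈ Icc 1 n, ∑ j ∈ range n, (if j < n / d then (Nat.totient d : ℝ) * (β ^ j * α) else 0) := by
          refine Finset.sum_congr rfl fun d hd => ?_
          have hsub : Finset.filter (fun j => j < n / d) (range n) = range (n / d) := by
            ext j
            simp only [Finset.mem_filter, Finset.mem_range]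
            have := Nat.div_le_self n d
            omega
          rw [← Finset.sum_filter, hsub]
      _ = ∑ j ∈ range n, ∑ d ∈ Icc 1 n, (if j < n / d then (Nat.totient d : ℝ) * (β ^ j * α) else 0) :=
          Finset.sum_comm
      _ = ∑ j ∈ range n, β ^ j * (α * Φr (n / (j+1))) := by
          refine Finset.sum_congr rfl fun j hj => ?_
          have hfil : Finset.filter (fun d => j < n / d) (Icc 1 n) = Icc 1 (n / (j+1)) := by
            ext d
            simp only [Finset.mem_filter, Finset.mem_Icc]
            constructor
            · rintro ⟨⟨h1, h2⟩, h3⟩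
              refine ⟨h1, ?_⟩
              have hd : 0 < d := h1
              have hmul : (j+1) * d ≤ n := (Nat.le_div_iff_mul_le hd).mp h3
              exact (Nat.le_div_iff_mul_le (Nat.succ_pos j)).mpr (by rw [mul_comm]; exact hmul)
            · rintro ⟨h1, h2⟩
              have hd : 0 < d := h1
              have hmul : d * (j+1) ≤ n := (Nat.le_div_iff_mul_le (Nat.succ_pos j)).mp h2
              refine ⟨⟨h1, ?_⟩, ?_⟩
              · calc d ≤ d * (j+1) := Nat.le_mul_of_pos_right d (Nat.succ_pos j)
                  _ ≤ n := hmul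
              · exact Nat.lt_of_succ_le ((Nat.le_div_iff_mul_le hd).mpr (by rw [mul_comm]; exact hmul))
          rw [← Finset.sum_filter, hfil, ← Finset.sum_mul]
          rw [hΦr]
          ring
  -- basic div facts
  have hxle : ∀ j : ℕ, ((n/(j+1) : ℕ):ℝ) ≤ (n:ℝ)/((j:ℝ)+1) := by
    intro j
    have h := Nat.cast_div_le (α := ℝ) (m := n) (n := j+1)
    have hc1 : ((j+1 : ℕ):ℝ) = (j:ℝ)+1 := by push_cast; ring
    rw [hc1] at h
    exact h
  have hxlt : ∀ j : ℕ, (n:ℝ)/((j:ℝ)+1) < ((n/(j+1) : ℕ):ℝ) + 1 := by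
    intro j
    rw [div_lt_iff₀ (by positivity)]
    have h := Nat.lt_mul_div_succ n (Nat.succ_pos j)
    calc (n:ℝ) < (((j+1) * (n/(j+1) + 1) : ℕ):ℝ) := by exact_mod_cast h
      _ = (((n/(j+1) : ℕ):ℝ)+1) * ((j:ℝ)+1) := by push_cast; ring
  have hxpos : ∀ j : ℕ, (0:ℝ) < (n:ℝ)/((j:ℝ)+1) := fun j => by positivity
  have hβj : ∀ j : ℕ, 0 ≤ β ^ j ∧ β ^ j ≤ 1 :=
    fun j => ⟨pow_nonneg hβ0 j, pow_le_one₀ hβ0 hβ1.le⟩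
  have hlogk : ∀ j : ℕ, Real.log ((n/(j+1) : ℕ):ℝ) ≤ L := by
    intro j
    rcases Nat.eq_zero_or_pos (n/(j+1)) with h0 | h0
    · rw [h0]; simp only [Nat.cast_zero, Real.log_zero]; linarith
    · rw [hL]
      exact Real.log_le_log (by exact_mod_cast h0) (by exact_mod_cast Nat.div_le_self n (j+1))
  have hlogknn : ∀ j : ℕ, 0 ≤ Real.log ((n/(j+1) : ℕ):ℝ) := fun j => Real.log_natCast_nonneg _
  have hHsum : ∑ j ∈ range n, (n:ℝ)/((j:ℝ)+1) ≤ (n:ℝ) * (L + 1) := by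
    have h1 : ∑ j ∈ range n, (1:ℝ)/((j:ℝ)+1) = ∑ e ∈ Icc 1 n, (1:ℝ)/(e:ℝ) := by
      rw [← Finset.Ico_add_one_right_eq_Icc, Finset.sum_Ico_eq_sum_range]
      refine (Finset.sum_congr (by congr 1) fun k _ => by push_cast; rw [add_comm 1 (k:ℝ)]).symm
    calc ∑ j ∈ range n, (n:ℝ)/((j:ℝ)+1) = (n:ℝ) * ∑ j ∈ range n, (1:ℝ)/((j:ℝ)+1) := by
          rw [Finset.mul_sum]; exact Finset.sum_congr rfl fun j _ => by ring
      _ ≤ (n:ℝ) * (L + 1) := by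
          rw [h1]
          have := harmonic_Icc n
          have hn0 : (0:ℝ) ≤ n := Nat.cast_nonneg n
          rw [← hL] at this
          nlinarith
  -- E1
  have hE1 : |(∑ j ∈ range n, β ^ j * (α * Φr (n / (j+1))))
      - α * c * ∑ j ∈ range n, β ^ j * ((n/(j+1) : ℕ):ℝ)^2|
      ≤ α * (3/2) * (n:ℝ) * (L+1)^2 := by
    have hterm : ∀ j ∈ range n,
        |β ^ j * (α * Φr (n / (j+1))) - α * c * (β ^ j * ((n/(j+1) : ℕ):ℝ)^2)|
          ≤ α * ((3/2) * (L+1) * ((n:ℝ)/((j:ℝ)+1))) := by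
      intro j _
      have hk := phi_asym (n/(j+1))
      rw [← hc] at hk
      have heq : β ^ j * (α * Φr (n / (j+1))) - α * c * (β ^ j * ((n/(j+1) : ℕ):ℝ)^2)
          = α * β ^ j * (Φr (n/(j+1)) - c * ((n/(j+1) : ℕ):ℝ)^2) := by ring
      rw [heq, abs_mul, abs_mul, abs_of_nonneg hα0.le, abs_of_nonneg (hβj j).1]
      have h1 : 3/2 * ((n/(j+1) : ℕ):ℝ) * (Real.log ((n/(j+1) : ℕ):ℝ) + 1)
          ≤ (3/2) * (L+1) * ((n:ℝ)/((j:ℝ)+1)) := by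
        have := hxle j
        have := hlogk j
        have := hlogknn j
        have hknn : (0:ℝ) ≤ ((n/(j+1) : ℕ):ℝ) := Nat.cast_nonneg _
        nlinarith
      calc α * β ^ j * |Φr (n/(j+1)) - c * ((n/(j+1) : ℕ):ℝ)^2|
          ≤ α * 1 * (3/2 * ((n/(j+1) : ℕ):ℝ) * (Real.log ((n/(j+1) : ℕ):ℝ) + 1)) := by
            refine mul_le_mul (by nlinarith [(hβj j).2]) hk (abs_nonneg _) (by positivity)
        _ ≤ α * ((3/2) * (L+1) * ((n:ℝ)/((j:ℝ)+1))) := by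
            rw [mul_one]
            exact mul_le_mul_of_nonneg_left h1 hα0.le
    rw [Finset.mul_sum, ← Finset.sum_sub_distrib]
    calc |∑ j ∈ range n, (β ^ j * (α * Φr (n / (j+1))) - α * c * (β ^ j * ((n/(j+1) : ℕ):ℝ)^2))|
        ≤ ∑ j ∈ range n, |β ^ j * (α * Φr (n / (j+1))) - α * c * (β ^ j * ((n/(j+1) : ℕ):ℝ)^2)| :=
          Finset.abs_sum_le_sum_abs _ _
      _ ≤ ∑ j ∈ range n, α * ((3/2) * (L+1) * ((n:ℝ)/((j:ℝ)+1))) := Finset.sum_le_sum hterm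
      _ = α * ((3/2) * (L+1)) * ∑ j ∈ range n, (n:ℝ)/((j:ℝ)+1) := by
          rw [Finset.mul_sum]; exact Finset.sum_congr rfl fun j _ => by ring
      _ ≤ α * (3/2) * (n:ℝ) * (L+1)^2 := by
          have h2 : (0:ℝ) ≤ α * ((3/2) * (L+1)) := by nlinarith
          have := mul_le_mul_of_nonneg_left hHsum h2
          nlinarith
  -- E2
  have hE2 : |α * c * (∑ j ∈ range n, β ^ j * ((n/(j+1) : ℕ):ℝ)^2)
      - α * c * ∑ j ∈ range n, β ^ j * ((n:ℝ)/((j:ℝ)+1))^2|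
      ≤ α * 2 * (n:ℝ) * (L+1) := by
    have hterm : ∀ j ∈ range n,
        |β ^ j * ((n/(j+1) : ℕ):ℝ)^2 - β ^ j * ((n:ℝ)/((j:ℝ)+1))^2|
          ≤ 2 * ((n:ℝ)/((j:ℝ)+1)) := by
      intro j _
      have h1 := hxle j
      have h2 := hxlt j
      have hknn : (0:ℝ) ≤ ((n/(j+1) : ℕ):ℝ) := Nat.cast_nonneg _
      have hd : |β ^ j * ((n/(j+1) : ℕ):ℝ)^2 - β ^ j * ((n:ℝ)/((j:ℝ)+1))^2|
          = β ^ j * (((n:ℝ)/((j:ℝ)+1))^2 - ((n/(j+1) : ℕ):ℝ)^2) := by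
        rw [abs_of_nonpos (by nlinarith [(hβj j).1, (hβj j).2, mul_le_mul h1 h1 hknn (hknn.trans h1)])]
        ring
      rw [hd]
      have hsq : ((n:ℝ)/((j:ℝ)+1))^2 - ((n/(j+1) : ℕ):ℝ)^2 ≤ 2 * ((n:ℝ)/((j:ℝ)+1)) := by
        nlinarith
      nlinarith [(hβj j).1, (hβj j).2, hxpos j]
    have hAB : α * c * (∑ j ∈ range n, β ^ j * ((n/(j+1) : ℕ):ℝ)^2)
        - α * c * (∑ j ∈ range n, β ^ j * ((n:ℝ)/((j:ℝ)+1))^2)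
        = α * c * ∑ j ∈ range n, (β ^ j * ((n/(j+1) : ℕ):ℝ)^2 - β ^ j * ((n:ℝ)/((j:ℝ)+1))^2) := by
      rw [Finset.sum_sub_distrib]; ring
    rw [hAB, abs_mul, abs_of_nonneg (by positivity : (0:ℝ) ≤ α * c)]
    have habs : |∑ j ∈ range n, (β ^ j * ((n/(j+1) : ℕ):ℝ)^2 - β ^ j * ((n:ℝ)/((j:ℝ)+1))^2)|
        ≤ 2 * ((n:ℝ) * (L+1)) := by
      calc |∑ j ∈ range n, (β ^ j * ((n/(j+1) : ℕ):ℝ)^2 - β ^ j * ((n:ℝ)/((j:ℝ)+1))^2)|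
          ≤ ∑ j ∈ range n, |β ^ j * ((n/(j+1) : ℕ):ℝ)^2 - β ^ j * ((n:ℝ)/((j:ℝ)+1))^2| :=
            Finset.abs_sum_le_sum_abs _ _
        _ ≤ ∑ j ∈ range n, 2 * ((n:ℝ)/((j:ℝ)+1)) := Finset.sum_le_sum hterm
        _ = 2 * ∑ j ∈ range n, (n:ℝ)/((j:ℝ)+1) := by rw [← Finset.mul_sum]
        _ ≤ 2 * ((n:ℝ) * (L+1)) := by
            have hLpos : (0:ℝ) ≤ L + 1 := by linarith
            linarith [hHsum]
    have hnL : (0:ℝ) ≤ (n:ℝ) * (L+1) := by nlinarith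
    calc α * c * |∑ j ∈ range n, (β ^ j * ((n/(j+1) : ℕ):ℝ)^2 - β ^ j * ((n:ℝ)/((j:ℝ)+1))^2)|
        ≤ α * c * (2 * ((n:ℝ) * (L+1))) := mul_le_mul_of_nonneg_left habs (by positivity)
      _ ≤ α * 2 * (n:ℝ) * (L+1) := by nlinarith [mul_le_mul_of_nonneg_left hc1 (by positivity : (0:ℝ) ≤ α * (2 * ((n:ℝ) * (L+1))))]
  -- E3
  have hE3 : |α * c * (∑ j ∈ range n, β ^ j * ((n:ℝ)/((j:ℝ)+1))^2) - α * c * ((n:ℝ)^2 * S)|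
      ≤ α * (n:ℝ) := by
    have hid : ∑ j ∈ range n, β ^ j * ((n:ℝ)/((j:ℝ)+1))^2
        = (n:ℝ)^2 * ∑ j ∈ range n, β ^ j / ((j:ℝ)+1)^2 := by
      rw [Finset.mul_sum]
      refine Finset.sum_congr rfl fun j _ => ?_
      have : ((j:ℝ)+1) ≠ 0 := by positivity
      field_simp
    have hsplit := Summable.sum_add_tsum_nat_add (f := fun k : ℕ => β ^ k / ((k:ℝ)+1)^2) n hSsum
    rw [← hS] at hsplit
    have htail : |∑' k : ℕ, β ^ (k+n) / (((k+n : ℕ):ℝ)+1)^2| ≤ 1/(n:ℝ) := by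
      set f : ℕ → ℝ := fun k => β ^ (k+n) / (((k+n : ℕ):ℝ)+1)^2 with hf
      set g : ℕ → ℝ := fun k => (1:ℝ)/((n:ℝ)+1+k)^2 with hg
      have hfs : Summable f :=
        (summable_nat_add_iff (f := fun k : ℕ => β ^ k / ((k:ℝ)+1)^2) n).mpr hSsum
      have hgs : Summable g := summable_shift_inv_sq n
      have hbound : ∀ k, |f k| ≤ g k := by
        intro k
        rw [hf, hg]
        simp only
        rw [abs_div, abs_of_nonneg (pow_nonneg hβ0 _), abs_of_nonneg (by positivity)]
        have h1 : β ^ (k+n) ≤ 1 := pow_le_one₀ hβ0 hβ1.le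
        have h2 : (((k+n : ℕ):ℝ)+1)^2 = ((n:ℝ)+1+k)^2 := by push_cast; ring
        rw [h2, div_le_div_iff₀ (by positivity) (by positivity)]
        nlinarith [sq_nonneg ((n:ℝ)+1+k)]
      have hub : ∀ k, f k ≤ g k := fun k => (le_abs_self _).trans (hbound k)
      have hlb : ∀ k, -g k ≤ f k := fun k => (neg_le_neg (hbound k)).trans (neg_abs_le _)
      have htl := tail_inv_sq n (by omega)
      refine abs_le.mpr ⟨?_, (Summable.tsum_le_tsum hub hfs hgs).trans htl⟩
      have h1 : ∑' k, -g k ≤ ∑' k, f k := Summable.tsum_le_tsum hlb hgs.neg hfs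
      rw [tsum_neg] at h1
      linarith
    have heq2 : α * c * (∑ j ∈ range n, β ^ j * ((n:ℝ)/((j:ℝ)+1))^2) - α * c * ((n:ℝ)^2 * S)
        = -(α * c * (n:ℝ)^2 * (∑' k : ℕ, β ^ (k+n) / (((k+n : ℕ):ℝ)+1)^2)) := by
      rw [hid, ← hsplit]
      ring
    rw [heq2, abs_neg, abs_mul, abs_of_nonneg (by positivity : (0:ℝ) ≤ α * c * (n:ℝ)^2)]
    calc α * c * (n:ℝ)^2 * |∑' k : ℕ, β ^ (k+n) / (((k+n : ℕ):ℝ)+1)^2|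
        ≤ α * c * (n:ℝ)^2 * (1/(n:ℝ)) := mul_le_mul_of_nonneg_left htail (by positivity)
      _ ≤ α * (n:ℝ) := by
          have h1 : α * c * (n:ℝ)^2 * (1/(n:ℝ)) = α * c * (n:ℝ) := by
            field_simp
          rw [h1]
          nlinarith [mul_le_mul_of_nonneg_left hc1 (by positivity : (0:ℝ) ≤ α * (n:ℝ))]
  -- coefficient identity
  have hcoef : (if α = 1 then (1:ℝ) else α * Li2 β / β) = α * S := by
    by_cases h1 : α = 1
    · rw [if_pos h1]
      have hβz : β = 0 := by rw [hβ, h1]; ring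
      have hS1 : S = 1 := by
        rw [hS, hβz]
        rw [tsum_eq_single 0 (fun k hk => by simp [zero_pow hk])]
        norm_num
      rw [hS1, h1, mul_one]
    · rw [if_neg h1]
      have hβz : β ≠ 0 := by
        rw [hβ]; intro h; apply h1; linarith [sub_eq_zero.mp h]
      have hLi : Li2 β = β * S := by
        rw [Li2, hS, ← tsum_mul_left]
        refine tsum_congr fun k => ?_
        rw [pow_succ]
        ring
      rw [hLi]
      field_simp
  -- combine
  have hmain : |(∑ d ∈ Icc 1 n, (Nat.totient d : ℝ) * (1 - β ^ (n / d)))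
      - c * (α * S) * (n:ℝ)^2|
      ≤ α * (3/2) * (n:ℝ) * (L+1)^2 + α * 2 * (n:ℝ) * (L+1) + α * (n:ℝ) := by
    have hP4 : c * (α * S) * (n:ℝ)^2 = α * c * ((n:ℝ)^2 * S) := by ring
    rw [stepA, hP4]
    calc |(∑ j ∈ range n, β ^ j * (α * Φr (n / (j+1)))) - α * c * ((n:ℝ)^2 * S)|
        ≤ |(∑ j ∈ range n, β ^ j * (α * Φr (n / (j+1))))
            - α * c * ∑ j ∈ range n, β ^ j * ((n/(j+1) : ℕ):ℝ)^2|
          + |α * c * (∑ j ∈ range n, β ^ j * ((n/(j+1) : ℕ):ℝ)^2)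
            - α * c * ∑ j ∈ range n, β ^ j * ((n:ℝ)/((j:ℝ)+1))^2|
          + |α * c * (∑ j ∈ range n, β ^ j * ((n:ℝ)/((j:ℝ)+1))^2) - α * c * ((n:ℝ)^2 * S)| := by
            linarith [abs_sub_le (∑ j ∈ range n, β ^ j * (α * Φr (n / (j+1))))
              (α * c * ∑ j ∈ range n, β ^ j * ((n/(j+1) : ℕ):ℝ)^2) (α * c * ((n:ℝ)^2 * S)),
              abs_sub_le (α * c * ∑ j ∈ range n, β ^ j * ((n/(j+1) : ℕ):ℝ)^2)
              (α * c * ∑ j ∈ range n, β ^ j * ((n:ℝ)/((j:ℝ)+1))^2) (α * c * ((n:ℝ)^2 * S))]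
      _ ≤ α * (3/2) * (n:ℝ) * (L+1)^2 + α * 2 * (n:ℝ) * (L+1) + α * (n:ℝ) :=
          add_le_add (add_le_add hE1 hE2) hE3
  rw [hcoef]
  have hfinal : α * (3/2) * (n:ℝ) * (L+1)^2 + α * 2 * (n:ℝ) * (L+1) + α * (n:ℝ)
      ≤ 30 * α * (n:ℝ) * L^2 := by
    have h3L : L + 1 ≤ 3 * L := by linarith
    have hLnn : (0:ℝ) ≤ L := by linarith
    have hsq : (L+1)^2 ≤ 9 * L^2 := by nlinarith
    have hL2' : L + 1 ≤ 6 * L^2 := by nlinarith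
    have h1' : (1:ℝ) ≤ 4 * L^2 := by nlinarith
    have hαn : (0:ℝ) ≤ α * (n:ℝ) := by positivity
    nlinarith [mul_le_mul_of_nonneg_left hsq (by positivity : (0:ℝ) ≤ α * (3/2) * (n:ℝ)),
      mul_le_mul_of_nonneg_left hL2' (by positivity : (0:ℝ) ≤ α * 2 * (n:ℝ)),
      mul_le_mul_of_nonneg_left h1' (by positivity : (0:ℝ) ≤ α * (n:ℝ))]
  calc |(∑ d ∈ Icc 1 n, (Nat.totient d : ℝ) * (1 - β ^ (n / d))) - c * (α * S) * (n:ℝ)^2|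
      ≤ α * (3/2) * (n:ℝ) * (L+1)^2 + α * 2 * (n:ℝ) * (L+1) + α * (n:ℝ) := hmain
    _ ≤ 30 * α * (n:ℝ) * L^2 := hfinal
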